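/- Let c ∈ ℂ, r > 0, let E be a compact subset of the open disk {z : |z - c| < r}, and let f : ℂ → ℂ be complex-differentiable on an open set containing the closed disk {z : |z - c| ≤ r}. For each n ∈ ℕ let x_0^{(n)}, …, x_n^{(n)} be distinct points of E, let m(n) ≤ n, and let z_1^{(n)}, …, z_{m(n)}^{(n)} ∈ ℂ \ E with z_j^{(n)} ∉ {x_0^{(n)}, …, x_n^{(n)}} for all j. Set q_n(s) = ∏_{j=1}^{m(n)} (s - z_j^{(n)}), φ_n(s) = ∏_{i=0}^n (s - x_i^{(n)}) / q_n(s), and let r_n(x) = ∑_{i=0}^n f(x_i^{(n)})·(q_n(x_i^{(n)})/q_n(x))·∏_{j≠i} (x - x_j^{(n)})/(x_i^{(n)} - x_j^{(n)}) be the rational interpolant of f with nodes x_i^{(n)} and poles z_j^{(n)}. Suppose ρ > 0 is such that limsup_{n→∞} ((sup_{x ∈ E} |φ_n(x)|)·(sup_{θ∈[0,2π]} 1/|φ_n(c + re^{iθ})|))^{1/(n+1)} ≤ ρ. Then for every x ∈ E, limsup_{n→∞} |f(x) - r_n(x)|^{1/(n+1)} ≤ ρ. -/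

import Mathlib

open Finset

open Polynomial in
private lemma kernel_poly_identity {N M : ℕ} (hM : M ≤ N + 1) (a : Fin (N + 1) → ℂ)
    (ha : Function.Injective a) (b : Fin M → ℂ) (w : ℂ) (hwa : ∀ i, w ≠ a i) (t : ℂ) :
    (∏ j, (w - b j)) * (∏ i, (t - a i))
      - (t - w) * ∑ i, ((∏ j, (a i - b j)) * ∏ j ∈ univ.erase i, (w - a j) / (a i - a j))
          * ∏ j ∈ univ.erase i, (t - a j)
      = (∏ i, (w - a i)) * (∏ j, (t - b j)) := by
  have hD : (C (∏ j, (w - b j)) * ∏ i, (X - C (a i))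
      - (X - C w) * ∑ i, C ((∏ j, (a i - b j)) * ∏ j ∈ univ.erase i, (w - a j) / (a i - a j))
          * ∏ j ∈ univ.erase i, (X - C (a j))
      - C (∏ i, (w - a i)) * ∏ j, (X - C (b j))) = 0 := by
    apply Polynomial.eq_zero_of_natDegree_lt_card_of_eval_eq_zero _
      (Fin.cons_injective_of_injective (x₀ := w) (by
        rintro ⟨i, rfl⟩; exact hwa i rfl) ha)
    · intro k
      induction k using Fin.cases with
      | zero =>
        simp only [Fin.cons_zero, eval_sub, eval_mul, eval_C, eval_X, eval_prod,
          eval_finset_sum]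
        ring
      | succ i =>
        simp only [Fin.cons_succ, eval_sub, eval_mul, eval_C, eval_X, eval_prod,
          eval_finset_sum]
        have h1 : (∏ k : Fin (N + 1), (a i - a k)) = 0 :=
          Finset.prod_eq_zero (mem_univ i) (sub_self _)
        have h2 : ∑ k : Fin (N + 1), ((∏ j, (a k - b j)) * ∏ j ∈ univ.erase k, (w - a j) / (a k - a j))
              * ∏ j ∈ univ.erase k, (a i - a j)
            = ((∏ j, (a i - b j)) * ∏ j ∈ univ.erase i, (w - a j) / (a i - a j))
              * ∏ j ∈ univ.erase i, (a i - a j) := by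
          apply Finset.sum_eq_single
          · intro k _ hk
            have hz : (∏ j ∈ univ.erase k, (a i - a j)) = 0 :=
              Finset.prod_eq_zero (Finset.mem_erase.mpr ⟨Ne.symm hk, mem_univ i⟩) (sub_self _)
            rw [hz, mul_zero]
          · intro h; exact absurd (mem_univ i) h
        have hℓ : (∏ j ∈ univ.erase i, (w - a j) / (a i - a j))
              * (∏ j ∈ univ.erase i, (a i - a j)) = ∏ j ∈ univ.erase i, (w - a j) := by
          rw [← Finset.prod_mul_distrib]
          exact Finset.prod_congr rfl fun j hj =>
            div_mul_cancel₀ _ (sub_ne_zero.mpr fun h => (Finset.mem_erase.mp hj).1 (ha h.symm))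
        have hω : (∏ j : Fin (N + 1), (w - a j))
            = (w - a i) * ∏ j ∈ univ.erase i, (w - a j) :=
          (Finset.mul_prod_erase univ _ (mem_univ i)).symm
        rw [h1, h2, hω, mul_zero, zero_sub]
        linear_combination ((w - a i) * (∏ j, (a i - b j))) * hℓ
    · refine lt_of_le_of_lt ?_ (Nat.lt_succ_of_le (le_refl (N + 1))) |>.trans_eq
        (Fintype.card_fin (N + 2)).symm
      refine (natDegree_sub_le _ _).trans (max_le ((natDegree_sub_le _ _).trans (max_le ?_ ?_)) ?_)
      · refine natDegree_mul_le.trans ?_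
        have : natDegree (∏ i, (X - C (a i))) ≤ N + 1 := by
          refine (natDegree_prod_le _ _).trans ?_
          simp [natDegree_X_sub_C]
        simp only [natDegree_C, zero_add]; exact this
      · refine natDegree_mul_le.trans ?_
        have h1 : natDegree (X - C w) ≤ 1 := le_of_eq (natDegree_X_sub_C w)
        have h2 : natDegree (∑ i, C ((∏ j, (a i - b j)) * ∏ j ∈ univ.erase i, (w - a j) / (a i - a j))
            * ∏ j ∈ univ.erase i, (X - C (a j))) ≤ N := by
          refine natDegree_sum_le_of_forall_le _ _ fun i _ => ?_
          refine natDegree_mul_le.trans ?_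
          have : natDegree (∏ j ∈ univ.erase i, (X - C (a j))) ≤ N := by
            refine (natDegree_prod_le _ _).trans ?_
            simp [natDegree_X_sub_C, Finset.card_erase_of_mem]
          simp only [natDegree_C, zero_add]; exact this
        omega
      · refine natDegree_mul_le.trans ?_
        have : natDegree (∏ j, (X - C (b j))) ≤ M := by
          refine (natDegree_prod_le _ _).trans ?_
          simp [natDegree_X_sub_C]
        simp only [natDegree_C, zero_add]
        omega
  have := congrArg (eval t) hD
  simp only [eval_sub, eval_mul, eval_C, eval_X, eval_prod, eval_finset_sum, eval_zero] at this
  linear_combination this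

private lemma kernel_identity {N M : ℕ} (hM : M ≤ N + 1) (a : Fin (N + 1) → ℂ)
    (ha : Function.Injective a) (b : Fin M → ℂ) (w t : ℂ) (hwa : ∀ i, w ≠ a i)
    (hwb : ∀ j, w ≠ b j) (hta : ∀ i, t ≠ a i) (htw : t ≠ w) :
    (t - w)⁻¹ - ∑ i, ((∏ j, (a i - b j)) / (∏ j, (w - b j))
        * ∏ j ∈ univ.erase i, (w - a j) / (a i - a j)) * (t - a i)⁻¹
      = (∏ i, (w - a i)) * (∏ j, (t - b j))
        / ((∏ j, (w - b j)) * (∏ i, (t - a i)) * (t - w)) := by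
  have hQ : (∏ j, (w - b j)) ≠ 0 :=
    Finset.prod_ne_zero_iff.mpr fun j _ => sub_ne_zero.mpr (hwb j)
  have hΩ : (∏ i, (t - a i)) ≠ 0 :=
    Finset.prod_ne_zero_iff.mpr fun i _ => sub_ne_zero.mpr (hta i)
  have htw' : t - w ≠ 0 := sub_ne_zero.mpr htw
  have key := kernel_poly_identity hM a ha b w hwa t
  have hsum : ∑ i, ((∏ j, (a i - b j)) / (∏ j, (w - b j))
        * ∏ j ∈ univ.erase i, (w - a j) / (a i - a j)) * (t - a i)⁻¹
      = (∑ i, ((∏ j, (a i - b j)) * ∏ j ∈ univ.erase i, (w - a j) / (a i - a j))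
          * ∏ j ∈ univ.erase i, (t - a j)) / ((∏ j, (w - b j)) * (∏ i, (t - a i))) := by
    rw [Finset.sum_div]
    refine Finset.sum_congr rfl fun i _ => ?_
    have hΩi : (∏ k, (t - a k)) = (t - a i) * ∏ j ∈ univ.erase i, (t - a j) :=
      (Finset.mul_prod_erase univ _ (mem_univ i)).symm
    have h1 : t - a i ≠ 0 := sub_ne_zero.mpr (hta i)
    have h2 : (∏ j ∈ univ.erase i, (t - a j)) ≠ 0 :=
      Finset.prod_ne_zero_iff.mpr fun j _ => sub_ne_zero.mpr (hta j)
    rw [hΩi]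
    generalize (∏ j ∈ univ.erase i, (w - a j) / (a i - a j)) = L
    field_simp
  rw [hsum]
  generalize hS : (∑ i, ((∏ j, (a i - b j)) * ∏ j ∈ univ.erase i, (w - a j) / (a i - a j))
      * ∏ j ∈ univ.erase i, (t - a j)) = S at key ⊢
  field_simp
  linear_combination key

private lemma circleIntegrable_finset_sum {ι : Type*} (s : Finset ι) (F : ι → ℂ → ℂ) {c : ℂ}
    {r : ℝ} (h : ∀ i ∈ s, CircleIntegrable (F i) c r) :
    CircleIntegrable (fun t => ∑ i ∈ s, F i t) c r := by
  have := IntervalIntegrable.sum (μ := MeasureTheory.volume) (a := 0) (b := 2 * Real.pi) s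
    (f := fun i θ => F i (circleMap c r θ)) (fun i hi => h i hi)
  have h2 : (∑ x ∈ s, fun θ => F x (circleMap c r θ))
      = fun θ => ∑ i ∈ s, F i (circleMap c r θ) := by
    funext θ; simp
  show IntervalIntegrable (fun θ => ∑ i ∈ s, F i (circleMap c r θ))
    MeasureTheory.volume 0 (2 * Real.pi)
  rw [← h2]; exact this

private lemma circleIntegral_finset_sum {ι : Type*} (s : Finset ι) (F : ι → ℂ → ℂ) {c : ℂ}
    {r : ℝ} (h : ∀ i ∈ s, CircleIntegrable (F i) c r) :
    (∮ t in C(c, r), ∑ i ∈ s, F i t) = ∑ i ∈ s, ∮ t in C(c, r), F i t := by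
  simp only [circleIntegral, Finset.smul_sum]
  exact intervalIntegral.integral_finset_sum fun i hi => (h i hi).out
private noncomputable def Asup (φ : ℕ → ℂ → ℂ) (E : Set ℂ) (n : ℕ) : ℝ :=
  ⨆ X ∈ E, ‖φ n X‖

private noncomputable def Bsup (φ : ℕ → ℂ → ℂ) (c : ℂ) (r : ℝ) (n : ℕ) : ℝ :=
  ⨆ θ : Set.Icc (0:ℝ) (2 * Real.pi),
    1 / ‖φ n (c + (r : ℂ) * Complex.exp (((θ : ℝ) : ℂ) * Complex.I))‖

set_option maxHeartbeats 2000000 in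
/-- Asymptotic exponential convergence estimate (2f) for rational interpolation with
prescribed poles in conditional form: if the geometric factor
`(sup_E |φ_n| · sup_Γ 1/|φ_n|)^{1/(n+1)}` has limsup at most `ρ`, then the rational
interpolation error satisfies `limsup |f(x) - r_n(x)|^{1/(n+1)} ≤ ρ` on `E`. -/
theorem rational_interpolation_exponential_convergence (c : ℂ) (r : ℝ) (hr : 0 < r)
    (E : Set ℂ) (hE_compact : IsCompact E) (hE_sub : E ⊆ Metric.ball c r)
    (f : ℂ → ℂ) (U : Set ℂ) (hUopen : IsOpen U) (hUsub : Metric.closedBall c r ⊆ U)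
    (hf : DifferentiableOn ℂ f U)
    (x : ∀ n : ℕ, Fin (n + 1) → ℂ)
    (hx_inj : ∀ n, Function.Injective (x n))
    (hx_mem : ∀ n i, x n i ∈ E)
    (m : ℕ → ℕ) (hm : ∀ n, m n ≤ n)
    (z : ∀ n : ℕ, Fin (m n) → ℂ)
    (hz_notE : ∀ n j, z n j ∉ E)
    (hz_ne : ∀ n j i, z n j ≠ x n i)
    (q : ℕ → ℂ → ℂ) (hq : ∀ n s, q n s = ∏ j, (s - z n j))
    (φ : ℕ → ℂ → ℂ) (hφ : ∀ n s, φ n s = (∏ i, (s - x n i)) / q n s)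
    (R : ℕ → ℂ → ℂ)
    (hR : ∀ n X, R n X = ∑ i, f (x n i) * (q n (x n i) / q n X) *
      ∏ j ∈ univ.erase i, (X - x n j) / (x n i - x n j))
    (ρ : ℝ) (hρ : 0 < ρ)
    (hfac : Filter.limsup (fun n : ℕ => ENNReal.ofReal
        (((⨆ X ∈ E, ‖φ n X‖) *
          (⨆ θ : Set.Icc (0:ℝ) (2 * Real.pi),
            1 / ‖φ n (c + (r : ℂ) * Complex.exp (((θ : ℝ) : ℂ) * Complex.I))‖))
          ^ ((1 : ℝ) / (n + 1))))
        Filter.atTop ≤ ENNReal.ofReal ρ) :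
    ∀ X ∈ E, Filter.limsup (fun n : ℕ =>
        ENNReal.ofReal (‖f X - R n X‖ ^ ((1 : ℝ) / (n + 1))))
      Filter.atTop ≤ ENNReal.ofReal ρ := by
  have hfac' : Filter.limsup (fun n : ℕ => ENNReal.ofReal
      ((Asup φ E n * Bsup φ c r n) ^ ((1 : ℝ) / (n + 1)))) Filter.atTop ≤ ENNReal.ofReal ρ :=
    hfac
  intro X hX
  have hXball : X ∈ Metric.ball c r := hE_sub hX
  have hXc : dist X c < r := Metric.mem_ball.mp hXball
  have hdpos : 0 < r - dist X c := by linarith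
  set d : ℝ := (r - dist X c)⁻¹ with hddef
  have hd0 : 0 ≤ d := inv_nonneg.mpr hdpos.le
  -- `f` is bounded on the circle
  have hsphU : Metric.sphere c r ⊆ U := Metric.sphere_subset_closedBall.trans hUsub
  have hfc : ContinuousOn f (Metric.sphere c r) := hf.continuousOn.mono hsphU
  obtain ⟨Mf, hMf⟩ := (isCompact_sphere c r).exists_bound_of_continuousOn hfc
  have hsphne : (c + r : ℂ) ∈ Metric.sphere c r := by
    simp [Complex.dist_eq, Complex.norm_real, abs_of_pos hr]
  have hMf0 : 0 ≤ Mf := le_trans (norm_nonneg _) (hMf _ hsphne)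
  -- points on the circle are away from `E` and the nodes
  have hballne : ∀ t ∈ Metric.sphere c r, ∀ w ∈ Metric.ball c r, t ≠ w := by
    intro t ht w hw h
    rw [h] at ht
    exact absurd (Metric.mem_sphere.mp ht) (ne_of_lt (Metric.mem_ball.mp hw))
  have hnode_ball : ∀ n i, x n i ∈ Metric.ball c r := fun n i => hE_sub (hx_mem n i)
  have hωne : ∀ n : ℕ, ∀ t ∈ Metric.sphere c r, (∏ i, (t - x n i)) ≠ 0 := fun n t ht =>
    Finset.prod_ne_zero_iff.mpr fun i _ =>
      sub_ne_zero.mpr (hballne t ht _ (hnode_ball n i))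
  have hqXne : ∀ n : ℕ, ∀ Y ∈ E, (∏ j, (Y - z n j)) ≠ 0 := fun n Y hY =>
    Finset.prod_ne_zero_iff.mpr fun j _ =>
      sub_ne_zero.mpr fun h => hz_notE n j (h ▸ hY)
  -- expressing `|φ n|` by products
  have hφabs : ∀ n : ℕ, ∀ s : ℂ, ‖φ n s‖
      = ‖∏ i, (s - x n i)‖ / ‖∏ j, (s - z n j)‖ := by
    intro n s; rw [hφ, hq, norm_div]
  have hinvφ : ∀ n : ℕ, ∀ s : ℂ, 1 / ‖φ n s‖
      = ‖∏ j, (s - z n j)‖ / ‖∏ i, (s - x n i)‖ := by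
    intro n s; rw [one_div, hφabs, inv_div]
  -- nonnegativity of the sups
  have hA0 : ∀ n, 0 ≤ Asup φ E n := fun n =>
    Real.iSup_nonneg fun Y => Real.iSup_nonneg fun _ => norm_nonneg _
  have hB0 : ∀ n, 0 ≤ Bsup φ c r n := fun n =>
    Real.iSup_nonneg fun θ => by positivity
  have hS0 : ∀ n, 0 ≤ Asup φ E n * Bsup φ c r n := fun n => mul_nonneg (hA0 n) (hB0 n)
  set C0 : ℝ := max (r * (d * Mf)) 1 with hC0def
  have hC0one : (1:ℝ) ≤ C0 := le_max_right _ _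
  have hC0pos : (0:ℝ) < C0 := lt_of_lt_of_le one_pos hC0one
  -- the sup over E bounds |φ n X|
  have hφA : ∀ n, ‖φ n X‖ ≤ Asup φ E n := by
    intro n
    have hcont : ContinuousOn (fun Y => ‖φ n Y‖) E := by
      have hfun : (fun Y => ‖φ n Y‖)
          = fun Y => ‖(∏ i, (Y - x n i)) / (∏ j, (Y - z n j))‖ := by
        funext Y; rw [hφ, hq]
      rw [hfun]
      apply continuous_norm.comp_continuousOn
      apply ContinuousOn.div
      · exact (continuous_finset_prod _ fun i _ =>
          continuous_id.sub continuous_const).continuousOn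
      · exact (continuous_finset_prod _ fun j _ =>
          continuous_id.sub continuous_const).continuousOn
      · exact fun Y hY => hqXne n Y hY
    obtain ⟨Ca, hCa⟩ := hE_compact.exists_bound_of_continuousOn hcont
    have hbdd : BddAbove (Set.range fun Y => ⨆ _ : Y ∈ E, ‖φ n Y‖) := by
      refine ⟨max Ca 0, ?_⟩
      rintro v ⟨Y, rfl⟩
      dsimp only
      by_cases hY : Y ∈ E
      · rw [ciSup_pos hY]
        refine le_max_of_le_left ?_
        have := hCa Y hY
        rwa [Real.norm_eq_abs, abs_of_nonneg (norm_nonneg _)] at this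
      · haveI : IsEmpty (Y ∈ E) := ⟨hY⟩
        rw [Real.iSup_of_isEmpty]
        exact le_max_right _ _
    calc ‖φ n X‖ = ⨆ _ : X ∈ E, ‖φ n X‖ :=
        (ciSup_pos (f := fun _ : X ∈ E => ‖φ n X‖) hX).symm
      _ ≤ Asup φ E n := le_ciSup hbdd X
  -- the sup over the circle bounds |q n t| / |ω n t|
  have hptS : ∀ θ : ℝ, (c + (r:ℂ) * Complex.exp ((θ:ℂ) * Complex.I)) ∈ Metric.sphere c r := by
    intro θ
    rw [Metric.mem_sphere, Complex.dist_eq]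
    rw [show c + (r:ℂ) * Complex.exp ((θ:ℂ) * Complex.I) - c
        = (r:ℂ) * Complex.exp ((θ:ℂ) * Complex.I) from by ring]
    rw [norm_mul, Complex.norm_real, Complex.norm_exp_ofReal_mul_I, mul_one, Real.norm_eq_abs, abs_of_pos hr]
  have hBle : ∀ n : ℕ, ∀ t ∈ Metric.sphere c r,
      ‖∏ j, (t - z n j)‖ / ‖∏ i, (t - x n i)‖ ≤ Bsup φ c r n := by
    intro n t ht
    have hbdd : BddAbove (Set.range fun θ : Set.Icc (0:ℝ) (2 * Real.pi) =>
        1 / ‖φ n (c + (r : ℂ) * Complex.exp (((θ : ℝ) : ℂ) * Complex.I))‖) := by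
      have hfeq : (fun θ : Set.Icc (0:ℝ) (2 * Real.pi) =>
          1 / ‖φ n (c + (r : ℂ) * Complex.exp (((θ : ℝ) : ℂ) * Complex.I))‖)
          = fun θ : Set.Icc (0:ℝ) (2 * Real.pi) =>
            ‖∏ j, ((c + (r:ℂ) * Complex.exp (((θ:ℝ):ℂ) * Complex.I)) - z n j)‖
            / ‖∏ i, ((c + (r:ℂ) * Complex.exp (((θ:ℝ):ℂ) * Complex.I)) - x n i)‖ :=
        funext fun θ => hinvφ n _
      rw [hfeq]
      have hp : Continuous fun θ : Set.Icc (0:ℝ) (2 * Real.pi) =>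
          c + (r:ℂ) * Complex.exp (((θ:ℝ):ℂ) * Complex.I) := by
        apply continuous_const.add
        apply continuous_const.mul
        exact Complex.continuous_exp.comp
          ((Complex.continuous_ofReal.comp continuous_subtype_val).mul continuous_const)
      have hcont2 : Continuous fun θ : Set.Icc (0:ℝ) (2 * Real.pi) =>
          ‖∏ j, ((c + (r:ℂ) * Complex.exp (((θ:ℝ):ℂ) * Complex.I)) - z n j)‖
          / ‖∏ i, ((c + (r:ℂ) * Complex.exp (((θ:ℝ):ℂ) * Complex.I)) - x n i)‖ := by
        apply Continuous.div
        · exact continuous_norm.comp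
            (continuous_finset_prod _ fun j _ => hp.sub continuous_const)
        · exact continuous_norm.comp
            (continuous_finset_prod _ fun i _ => hp.sub continuous_const)
        · intro θ
          exact norm_ne_zero_iff.mpr (hωne n _ (hptS θ))
      exact (isCompact_range hcont2).bddAbove
    obtain ⟨θ, hθmem, hθeq⟩ : ∃ θ : ℝ, θ ∈ Set.Icc (0:ℝ) (2 * Real.pi) ∧
        c + (r:ℂ) * Complex.exp ((θ:ℂ) * Complex.I) = t := by
      have h1 : ‖t - c‖ = r := by
        have h1' := Metric.mem_sphere.mp ht
        rwa [Complex.dist_eq] at h1'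
      have h2 : (r:ℂ) * Complex.exp ((Complex.arg (t - c) : ℂ) * Complex.I) = t - c := by
        have h3 := Complex.norm_mul_exp_arg_mul_I (t - c)
        rwa [h1] at h3
      rcases le_or_gt 0 (Complex.arg (t - c)) with hpos | hneg
      · refine ⟨Complex.arg (t - c),
          ⟨hpos, (Complex.arg_le_pi _).trans (by linarith [Real.pi_pos])⟩, ?_⟩
        rw [h2]; ring
      · refine ⟨Complex.arg (t - c) + 2 * Real.pi,
          ⟨by linarith [Complex.neg_pi_lt_arg (t - c), Real.pi_pos], by linarith⟩, ?_⟩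
        have h4 : Complex.exp (((Complex.arg (t - c) + 2 * Real.pi : ℝ) : ℂ) * Complex.I)
            = Complex.exp ((Complex.arg (t - c) : ℂ) * Complex.I) := by
          push_cast
          rw [add_mul, Complex.exp_add, Complex.exp_two_pi_mul_I, mul_one]
        rw [h4, h2]; ring
    have hval : (1 : ℝ)
        / ‖φ n (c + (r:ℂ) * Complex.exp ((θ:ℂ) * Complex.I))‖
        = ‖∏ j, (t - z n j)‖ / ‖∏ i, (t - x n i)‖ := by
      rw [hθeq, hinvφ]
    rw [← hval]
    exact le_ciSup hbdd ⟨θ, hθmem⟩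
  -- the key per-n bound
  have hqXn : ∀ n : ℕ, q n X ≠ 0 := fun n => by rw [hq]; exact hqXne n X hX
  have keybound : ∀ n : ℕ,
      ‖f X - R n X‖ ≤ C0 * (Asup φ E n * Bsup φ c r n) := by
    intro n
    by_cases hnode : ∃ i, X = x n i
    · obtain ⟨i, hi⟩ := hnode
      have hRX : R n X = f X := by
        rw [hR, Finset.sum_eq_single i]
        · rw [← hi, div_self (hqXn n), mul_one,
            Finset.prod_congr rfl (fun j hj => div_self (sub_ne_zero.mpr (fun h =>
              (Finset.mem_erase.mp hj).1 ((hx_inj n (hi.symm.trans h)).symm)))),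
            Finset.prod_const_one, mul_one]
        · intro k _ hk
          have hzero : (∏ j ∈ univ.erase k, (X - x n j) / (x n k - x n j)) = 0 :=
            Finset.prod_eq_zero (Finset.mem_erase.mpr ⟨Ne.symm hk, mem_univ i⟩)
              (by rw [← hi, sub_self, zero_div])
          rw [hzero, mul_zero]
        · intro h; exact absurd (mem_univ i) h
      rw [hRX, sub_self, norm_zero]
      exact mul_nonneg hC0pos.le (hS0 n)
    · push_neg at hnode
      set ci : Fin (n + 1) → ℂ := fun i =>
        ((∏ j, (x n i - z n j)) / (∏ j, (X - z n j)))
          * ∏ j ∈ univ.erase i, (X - x n j) / (x n i - x n j) with hci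
      set K : ℂ → ℂ := fun t => (t - X)⁻¹ - ∑ i, ci i * (t - x n i)⁻¹ with hK
      have hCauchy : ∀ w ∈ Metric.ball c r,
          (∮ t in C(c, r), (t - w)⁻¹ * f t) = (2 * Real.pi * Complex.I) * f w := by
        intro w hw
        have hd := (hf.mono hUsub).circleIntegral_sub_inv_smul hw
        simpa [smul_eq_mul] using hd
      have hContInv : ∀ w ∈ Metric.ball c r, ∀ Aco : ℂ,
          CircleIntegrable (fun t => Aco * ((t - w)⁻¹ * f t)) c r := by
        intro w hw Aco
        apply ContinuousOn.circleIntegrable hr.le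
        apply ContinuousOn.mul continuousOn_const
        apply ContinuousOn.mul ?_ hfc
        exact ContinuousOn.inv₀ (continuous_id.sub continuous_const).continuousOn
          fun t ht => sub_ne_zero.mpr (hballne t ht w hw)
      have hint1 : CircleIntegrable (fun t => (t - X)⁻¹ * f t) c r := by
        have := hContInv X hXball 1
        simpa [one_mul] using this
      have hint2 : ∀ i : Fin (n + 1),
          CircleIntegrable (fun t => ci i * ((t - x n i)⁻¹ * f t)) c r :=
        fun i => hContInv _ (hnode_ball n i) _
      have hintsum : CircleIntegrable (fun t => ∑ i, ci i * ((t - x n i)⁻¹ * f t)) c r :=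
        circleIntegrable_finset_sum _ _ fun i _ => hint2 i
      have hKf : (fun t => K t * f t)
          = fun t => (t - X)⁻¹ * f t - ∑ i, ci i * ((t - x n i)⁻¹ * f t) := by
        funext t
        simp only [hK]
        rw [sub_mul, Finset.sum_mul]
        congr 1
        exact Finset.sum_congr rfl fun i _ => by ring
      have hIK : (∮ t in C(c, r), K t * f t)
          = (2 * Real.pi * Complex.I) * (f X - R n X) := by
        rw [hKf, circleIntegral.integral_sub hint1 hintsum,
          circleIntegral_finset_sum _ _ fun i _ => hint2 i]
        have hterm : ∀ i : Fin (n + 1),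
            (∮ t in C(c, r), ci i * ((t - x n i)⁻¹ * f t))
              = ci i * ((2 * Real.pi * Complex.I) * f (x n i)) := by
          intro i
          rw [circleIntegral.integral_const_mul, hCauchy _ (hnode_ball n i)]
        rw [Finset.sum_congr rfl fun i _ => hterm i, hCauchy X hXball, hR]
        simp only [hq, hci]
        rw [mul_sub, Finset.mul_sum]
        congr 1
        exact Finset.sum_congr rfl fun i _ => by ring
      have hptb : ∀ t ∈ Metric.sphere c r,
          ‖K t * f t‖ ≤ Asup φ E n * Bsup φ c r n * d * Mf := by
        intro t ht
        have htX : t ≠ X := hballne t ht X hXball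
        have hta : ∀ i, t ≠ x n i := fun i => hballne t ht _ (hnode_ball n i)
        have hKid := kernel_identity ((hm n).trans (Nat.le_succ n)) (x n) (hx_inj n) (z n) X t
          hnode (fun j h => hz_notE n j (h ▸ hX)) hta htX
        have hKt : K t = (∏ i, (X - x n i)) * (∏ j, (t - z n j))
            / ((∏ j, (X - z n j)) * (∏ i, (t - x n i)) * (t - X)) := by
          simp only [hK, hci]
          exact hKid
        rw [norm_mul, hKt, norm_div, norm_mul,
          norm_mul, norm_mul]
        rw [show ‖∏ i, (X - x n i)‖ * ‖∏ j, (t - z n j)‖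
            / (‖∏ j, (X - z n j)‖ * ‖∏ i, (t - x n i)‖
              * ‖t - X‖)
            = ‖∏ i, (X - x n i)‖ / ‖∏ j, (X - z n j)‖
              * (‖∏ j, (t - z n j)‖ / ‖∏ i, (t - x n i)‖)
              * (‖t - X‖)⁻¹ from by ring]
        have e1 : ‖∏ i, (X - x n i)‖ / ‖∏ j, (X - z n j)‖
            ≤ Asup φ E n := by
          rw [← hφabs]
          exact hφA n
        have e2 := hBle n t ht
        have e3 : (‖t - X‖)⁻¹ ≤ d := by
          have h6 : ‖t - X‖ = dist t X := (Complex.dist_eq t X).symm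
          have h7 : dist t c ≤ dist t X + dist X c := dist_triangle t X c
          have h8 : dist t c = r := Metric.mem_sphere.mp ht
          have h5 : r - dist X c ≤ ‖t - X‖ := by rw [h6]; linarith
          exact inv_anti₀ hdpos h5
        have hfb : ‖f t‖ ≤ Mf := by
          have := hMf t ht
          exact this
        refine mul_le_mul ?_ hfb (norm_nonneg _) ?_
        · refine mul_le_mul (mul_le_mul e1 e2 (by positivity) (hA0 n)) e3
            (by positivity) (hS0 n)
        · exact mul_nonneg (hS0 n) hd0
      have hML := circleIntegral.norm_integral_le_of_norm_le_const hr.le hptb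
      have h2π : ‖2 * Real.pi * Complex.I‖ = 2 * Real.pi := by
        rw [norm_mul, norm_mul, Complex.norm_two, Complex.norm_I, Complex.norm_real,
          Real.norm_eq_abs, abs_of_pos Real.pi_pos, mul_one]
      have h2πpos : (0:ℝ) < 2 * Real.pi := by positivity
      have habs : 2 * Real.pi * ‖f X - R n X‖
          ≤ 2 * Real.pi * (r * (Asup φ E n * Bsup φ c r n * d * Mf)) := by
        have hc := congrArg (‖·‖) hIK
        rw [norm_mul, h2π] at hc
        rw [← hc]
        calc ‖∮ t in C(c, r), K t * f t‖
            = ‖∮ t in C(c, r), K t * f t‖ := rfl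
          _ ≤ 2 * Real.pi * r * (Asup φ E n * Bsup φ c r n * d * Mf) := hML
          _ = 2 * Real.pi * (r * (Asup φ E n * Bsup φ c r n * d * Mf)) := by ring
      have hfin : ‖f X - R n X‖
          ≤ r * (Asup φ E n * Bsup φ c r n * d * Mf) :=
        le_of_mul_le_mul_left habs h2πpos
      calc ‖f X - R n X‖ ≤ r * (Asup φ E n * Bsup φ c r n * d * Mf) := hfin
        _ = (r * (d * Mf)) * (Asup φ E n * Bsup φ c r n) := by ring
        _ ≤ C0 * (Asup φ E n * Bsup φ c r n) :=
            mul_le_mul_of_nonneg_right (le_max_left _ _) (hS0 n)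
  -- the limsup estimate
  refine ENNReal.le_of_forall_pos_le_add fun ε hε _ => ?_
  have hεR : (0:ℝ) < (ε : ℝ) := hε
  have hδ : 0 < (ε : ℝ) / ρ := div_pos hεR hρ
  set δ : ℝ := (ε : ℝ) / ρ with hδdef
  have htend : Filter.Tendsto (fun n : ℕ => C0 ^ ((1:ℝ) / (n + 1)))
      Filter.atTop (nhds 1) := by
    have h0 : Filter.Tendsto (fun n : ℕ => (1:ℝ) / (n + 1)) Filter.atTop (nhds 0) :=
      tendsto_one_div_add_atTop_nhds_zero_nat
    have hcont := (Real.continuousAt_const_rpow (a := C0) (b := 0) hC0pos.ne').tendsto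
    have := hcont.comp h0
    simpa [Function.comp_def, Real.rpow_zero] using this
  have hev : ∀ᶠ n : ℕ in Filter.atTop, C0 ^ ((1:ℝ) / (n + 1)) < 1 + δ :=
    htend.eventually (gt_mem_nhds (by linarith))
  have hevle : ∀ᶠ n : ℕ in Filter.atTop,
      ENNReal.ofReal (‖f X - R n X‖ ^ ((1 : ℝ) / (n + 1)))
        ≤ ENNReal.ofReal (1 + δ)
          * ENNReal.ofReal ((Asup φ E n * Bsup φ c r n) ^ ((1 : ℝ) / (n + 1))) := by
    filter_upwards [hev] with n hn
    have he0 : (0:ℝ) ≤ (1:ℝ) / (n + 1) := by positivity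
    have h1 : ‖f X - R n X‖ ^ ((1:ℝ) / (n + 1))
        ≤ (C0 * (Asup φ E n * Bsup φ c r n)) ^ ((1:ℝ) / (n + 1)) :=
      Real.rpow_le_rpow (norm_nonneg _) (keybound n) he0
    have h2 : (C0 * (Asup φ E n * Bsup φ c r n)) ^ ((1:ℝ) / (n + 1))
        = C0 ^ ((1:ℝ) / (n + 1)) * (Asup φ E n * Bsup φ c r n) ^ ((1:ℝ) / (n + 1)) :=
      Real.mul_rpow hC0pos.le (hS0 n)
    have h3 : C0 ^ ((1:ℝ) / (n + 1)) * (Asup φ E n * Bsup φ c r n) ^ ((1:ℝ) / (n + 1))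
        ≤ (1 + δ) * (Asup φ E n * Bsup φ c r n) ^ ((1:ℝ) / (n + 1)) :=
      mul_le_mul_of_nonneg_right hn.le (Real.rpow_nonneg (hS0 n) _)
    calc ENNReal.ofReal (‖f X - R n X‖ ^ ((1 : ℝ) / (n + 1)))
        ≤ ENNReal.ofReal ((1 + δ) * (Asup φ E n * Bsup φ c r n) ^ ((1:ℝ) / (n + 1))) :=
          ENNReal.ofReal_le_ofReal (h1.trans ((le_of_eq h2).trans h3))
      _ = ENNReal.ofReal (1 + δ)
          * ENNReal.ofReal ((Asup φ E n * Bsup φ c r n) ^ ((1:ℝ) / (n + 1))) :=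
          ENNReal.ofReal_mul (by positivity)
  calc Filter.limsup (fun n : ℕ =>
        ENNReal.ofReal (‖f X - R n X‖ ^ ((1 : ℝ) / (n + 1)))) Filter.atTop
      ≤ Filter.limsup (fun n : ℕ => ENNReal.ofReal (1 + δ)
          * ENNReal.ofReal ((Asup φ E n * Bsup φ c r n) ^ ((1 : ℝ) / (n + 1))))
          Filter.atTop := Filter.limsup_le_limsup hevle
    _ = ENNReal.ofReal (1 + δ) * Filter.limsup (fun n : ℕ =>
          ENNReal.ofReal ((Asup φ E n * Bsup φ c r n) ^ ((1 : ℝ) / (n + 1))))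
          Filter.atTop := ENNReal.limsup_const_mul_of_ne_top ENNReal.ofReal_ne_top
    _ ≤ ENNReal.ofReal (1 + δ) * ENNReal.ofReal ρ := mul_le_mul_right hfac' _
    _ = ENNReal.ofReal ((1 + δ) * ρ) := (ENNReal.ofReal_mul (by positivity)).symm
    _ = ENNReal.ofReal (ρ + (ε : ℝ)) := by
        rw [hδdef]
        congr 1
        field_simp
    _ ≤ ENNReal.ofReal ρ + ENNReal.ofReal ((ε : ℝ)) := ENNReal.ofReal_add_le
    _ = ENNReal.ofReal ρ + ε := by rw [ENNReal.ofReal_coe_nnreal]
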